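/- Let 1 < α < 2, N > 2, and suppose K : (0,∞) × ℝ^N → ℝ satisfies |K(t,x)| ≤ |x|^{-N} exp(-c(t^{-α}|x|²)^{1/(2-α)}) for |x|² t^{-α} ≥ 1 and |K(t,x)| ≤ |x|^{-N+2} t^{-α} for |x|² t^{-α} < 1. Then for any p₂ with 1 ≤ p₂ < N/(N-2) there is C > 0 such that ‖K(t,·)‖_{L^{p₂}(ℝ^N)} ≤ C t^{-(α/2) N (1 - 1/p₂)} for all t > 0. -/

import Mathlib

open MeasureTheory
open Metric Real

lemma aux_ball (N : ℕ) (hN : 0 < N) {s : ℝ} (hs0 : 0 < s) (hsN : s < N) :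
    IntegrableOn (fun y : EuclideanSpace ℝ (Fin N) => ‖y‖ ^ (-s)) (ball 0 1) := by
  set E := EuclideanSpace ℝ (Fin N)
  haveI : Nonempty (Fin N) := ⟨⟨0, hN⟩⟩
  haveI : Nontrivial E := inferInstance
  have hfr : Module.finrank ℝ E = N := finrank_euclideanSpace_fin
  set r : ℕ → ℝ := fun k => ((1:ℝ)/2) ^ k with hr
  have hr2 : ∀ k : ℕ, r k = (2:ℝ) ^ (-(k:ℝ)) := by
    intro k
    rw [hr, rpow_neg (by norm_num), rpow_natCast]
    simp [inv_pow]
  have hrpos : ∀ k, 0 < r k := fun k => pow_pos (by norm_num) _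
  set S : ℕ → Set E := fun k => {y | r (k+1) ≤ ‖y‖} ∩ ball 0 (r k) with hS
  have hcover : ball (0:E) 1 ⊆ {0} ∪ ⋃ k, S k := by
    intro y hy
    rcases eq_or_ne y 0 with rfl | hy0
    · exact Or.inl rfl
    right
    have hy1 : ‖y‖ < 1 := by simpa using hy
    have hy0' : 0 < ‖y‖ := norm_pos_iff.2 hy0
    have hex : ∃ k, r (k+1) ≤ ‖y‖ := by
      obtain ⟨n, hn⟩ := exists_pow_lt_of_lt_one hy0' (by norm_num : (1:ℝ)/2 < 1)
      exact ⟨n, le_of_lt (lt_of_le_of_lt (pow_le_pow_of_le_one (by norm_num) (by norm_num) (by omega)) hn)⟩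
    classical
    refine Set.mem_iUnion.2 ⟨Nat.find hex, Nat.find_spec hex, ?_⟩
    simp only [hS, mem_ball, dist_zero_right]
    rcases Nat.eq_zero_or_pos (Nat.find hex) with hk0 | hkpos
    · rw [hk0]; simpa [hr] using hy1
    · have hmin := Nat.find_min hex (m := Nat.find hex - 1) (by omega)
      push_neg at hmin
      have hk : Nat.find hex - 1 + 1 = Nat.find hex := by omega
      rwa [hk] at hmin
  -- measurability of S k
  have hSm : ∀ k, MeasurableSet (S k) := by
    intro k
    exact ((isClosed_le continuous_const continuous_norm).measurableSet).inter
      measurableSet_ball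
  constructor
  · exact (measurable_norm.pow_const _).aestronglyMeasurable
  · rw [hasFiniteIntegral_iff_ofReal (ae_of_all _ fun y => rpow_nonneg (norm_nonneg _) _)]
    set f : E → ENNReal := fun y => ENNReal.ofReal (‖y‖ ^ (-s)) with hf
    set mB := volume (ball (0:E) 1) with hmB
    set q : ENNReal := ENNReal.ofReal ((2:ℝ) ^ (s - (N:ℝ))) with hq
    have hq1 : q < 1 := by
      rw [hq, ← ENNReal.ofReal_one]
      exact ENNReal.ofReal_lt_ofReal_iff (by norm_num) |>.2
        (rpow_lt_one_of_one_lt_of_neg one_lt_two (by linarith))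
    have key : ∀ k : ℕ, r (k+1) ^ (-s) * r k ^ (N:ℕ) = 2 ^ s * ((2:ℝ) ^ (s - (N:ℝ))) ^ k := by
      intro k
      rw [hr2, hr2, ← rpow_natCast ((2:ℝ) ^ (-(k:ℝ))) N,
        ← rpow_natCast ((2:ℝ) ^ (s - (N:ℝ))) k,
        ← rpow_mul (by norm_num : (0:ℝ) ≤ 2), ← rpow_mul (by norm_num : (0:ℝ) ≤ 2),
        ← rpow_mul (by norm_num : (0:ℝ) ≤ 2), ← rpow_add two_pos, ← rpow_add two_pos]
      congr 1
      push_cast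
      ring
    have hterm : ∀ k : ℕ, (∫⁻ y in S k, f y) ≤ ENNReal.ofReal (2 ^ s) * q ^ k * mB := by
      intro k
      have h1 : (∫⁻ y in S k, f y) ≤ ∫⁻ _ in S k, ENNReal.ofReal (r (k+1) ^ (-s)) := by
        refine setLIntegral_mono' (hSm k) fun y hy => ?_
        exact ENNReal.ofReal_le_ofReal
          (rpow_le_rpow_of_nonpos (hrpos _) hy.1 (neg_nonpos.2 hs0.le))
      rw [setLIntegral_const] at h1
      have h2 : volume (S k) ≤ volume (ball (0:E) (r k)) :=
        measure_mono Set.inter_subset_right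
      have h3 : volume (ball (0:E) (r k)) = ENNReal.ofReal (r k ^ (N:ℕ)) * mB := by
        rw [hmB, Measure.addHaar_ball volume (0:E) (hrpos k).le, hfr]
      calc (∫⁻ y in S k, f y)
          ≤ ENNReal.ofReal (r (k+1) ^ (-s)) * volume (S k) := h1
        _ ≤ ENNReal.ofReal (r (k+1) ^ (-s)) * (ENNReal.ofReal (r k ^ (N:ℕ)) * mB) := by
            rw [← h3]; exact mul_le_mul_right h2 _
        _ = ENNReal.ofReal (r (k+1) ^ (-s) * r k ^ (N:ℕ)) * mB := by
            rw [ENNReal.ofReal_mul (rpow_nonneg (hrpos _).le _), mul_assoc]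
        _ = ENNReal.ofReal (2 ^ s * ((2:ℝ) ^ (s - (N:ℝ))) ^ k) * mB := by rw [key]
        _ = ENNReal.ofReal (2 ^ s) * q ^ k * mB := by
            rw [ENNReal.ofReal_mul (rpow_nonneg (by norm_num) _), hq,
              ENNReal.ofReal_pow (rpow_nonneg (by norm_num) _)]
    have hsum : (∑' k : ℕ, ENNReal.ofReal (2 ^ s) * q ^ k * mB) < ⊤ := by
      rw [ENNReal.tsum_mul_right, ENNReal.tsum_mul_left, ENNReal.tsum_geometric]
      refine ENNReal.mul_lt_top (ENNReal.mul_lt_top ENNReal.ofReal_lt_top ?_) measure_ball_lt_top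
      rw [lt_top_iff_ne_top, ENNReal.inv_ne_top]
      simp [tsub_eq_zero_iff_le, not_le, hq1]
    calc (∫⁻ y in ball (0:E) 1, f y)
        ≤ ∫⁻ y in ({0} ∪ ⋃ k, S k : Set E), f y := lintegral_mono_set hcover
      _ ≤ (∫⁻ y in ({0} : Set E), f y) + ∫⁻ y in (⋃ k, S k), f y := lintegral_union_le _ _ _
      _ ≤ 0 + ∑' k : ℕ, ∫⁻ y in S k, f y := by
          gcongr
          · rw [lintegral_singleton]
            have : f 0 = 0 := by
              simp [hf, Real.zero_rpow (neg_ne_zero.2 hs0.ne')]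
            rw [this, zero_mul]
          · exact lintegral_iUnion_le _ _
      _ ≤ 0 + ∑' k : ℕ, ENNReal.ofReal (2 ^ s) * q ^ k * mB := by
          gcongr with k
          exact hterm k
      _ < ⊤ := by rw [zero_add]; exact hsum



set_option maxHeartbeats 1000000 in
/-- `L^{p₂}` decay of the kernel `Ẽ_{α,α}(t,·)` in dimension `N > 2`,
for `1 ≤ p₂ < N/(N-2)`. -/
theorem stmt7 (N : ℕ) (hN : 2 < N) (α c p₂ : ℝ)
    (hα1 : 1 < α) (hα2 : α < 2) (hc : 0 < c)
    (hp1 : 1 ≤ p₂) (hp2 : p₂ < (N : ℝ) / ((N : ℝ) - 2))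
    (K : ℝ → EuclideanSpace ℝ (Fin N) → ℝ)
    (hK1 : ∀ t > (0:ℝ), ∀ x, 1 ≤ ‖x‖ ^ 2 * t ^ (-α) →
      |K t x| ≤ ‖x‖ ^ (-(N:ℝ)) * Real.exp (-c * (t ^ (-α) * ‖x‖ ^ 2) ^ (1 / (2 - α))))
    (hK2 : ∀ t > (0:ℝ), ∀ x, ‖x‖ ^ 2 * t ^ (-α) < 1 →
      |K t x| ≤ ‖x‖ ^ (-(N:ℝ) + 2) * t ^ (-α)) :
    ∃ C > (0:ℝ), ∀ t > (0:ℝ),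
      (∫ x, |K t x| ^ p₂) ^ (1 / p₂) ≤ C * t ^ (-(α / 2) * N * (1 - 1 / p₂)) := by
  have hN2 : (0:ℝ) < (N:ℝ) - 2 := by
    have : (2:ℝ) < N := by exact_mod_cast hN
    linarith
  have hp₂0 : (0:ℝ) < p₂ := lt_of_lt_of_le one_pos hp1
  set s : ℝ := ((N:ℝ) - 2) * p₂ with hs
  have hs0 : 0 < s := mul_pos hN2 hp₂0
  have hsN : s < (N:ℝ) := by
    have h := mul_lt_mul_of_pos_left hp2 hN2
    rwa [mul_div_cancel₀ _ (ne_of_gt hN2)] at h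
  haveI : Nonempty (Fin N) := ⟨⟨0, by omega⟩⟩
  haveI : Nontrivial (EuclideanSpace ℝ (Fin N)) := inferInstance
  have hfr : Module.finrank ℝ (EuclideanSpace ℝ (Fin N)) = N := finrank_euclideanSpace_fin
  set g : EuclideanSpace ℝ (Fin N) → ℝ := fun y => if ‖y‖ < 1 then ‖y‖ ^ (-s) else Real.exp (-(c*p₂) * ‖y‖^2) with hg
  have hg0 : ∀ y, 0 ≤ g y := by
    intro y
    rw [hg]; dsimp only; split
    · exact rpow_nonneg (norm_nonneg _) _
    · exact (Real.exp_pos _).le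
  have hgauss : Integrable (fun v : EuclideanSpace ℝ (Fin N) => Real.exp (-(c*p₂) * ‖v‖^2)) := by
    have hb : (0:ℝ) < (((c*p₂ : ℝ)) : ℂ).re := by simpa using mul_pos hc hp₂0
    have h := (GaussianFourier.integrable_cexp_neg_mul_sq_norm_add (V := EuclideanSpace ℝ (Fin N)) hb 0 0).norm
    refine h.congr (ae_of_all _ fun v => ?_)
    simp [Complex.norm_exp]
    left; norm_cast
  have hgint : Integrable g := by
    rw [← integrableOn_univ, ← Set.union_compl_self (Metric.ball (0:EuclideanSpace ℝ (Fin N)) 1)]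
    refine IntegrableOn.union ?_ ?_
    · refine (aux_ball N (by omega) hs0 hsN).congr_fun ?_ measurableSet_ball
      intro y hy
      rw [hg]; dsimp only; rw [if_pos (by simpa using hy)]
    · refine (hgauss.integrableOn).congr_fun ?_ measurableSet_ball.compl
      intro y hy
      rw [hg]; dsimp only
      rw [if_neg (by simpa using hy)]
  set e : ℝ := α/2 * N with he
  have hpt : ∀ t > (0:ℝ), ∀ x : EuclideanSpace ℝ (Fin N), |K t x| ^ p₂ ≤ t ^ (-(e*p₂)) * g (t ^ (-(α/2)) • x) := by
    intro t ht x
    set R : ℝ := t ^ (-(α/2)) with hRdef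
    have hRpos : 0 < R := rpow_pos_of_pos ht _
    have hnorm : ‖R • x‖ = R * ‖x‖ := by
      rw [norm_smul, Real.norm_eq_abs, abs_of_pos hRpos]
    have hsq : ‖R • x‖^2 = ‖x‖^2 * t ^ (-α) := by
      rw [hnorm, mul_pow, hRdef, ← rpow_natCast (t ^ (-(α/2))) 2, ← rpow_mul ht.le,
        show -(α/2) * ((2:ℕ):ℝ) = -α by push_cast; ring]
      ring
    by_cases hcase : ‖R • x‖ < 1
    · have hcond : ‖x‖^2 * t^(-α) < 1 := by
        rw [← hsq]; nlinarith [norm_nonneg (R • x)]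
      have hb := hK2 t ht x hcond
      have h1 : |K t x| ^ p₂ ≤ (‖x‖ ^ (-(N:ℝ)+2) * t^(-α)) ^ p₂ :=
        rpow_le_rpow (abs_nonneg _) hb hp₂0.le
      refine h1.trans_eq ?_
      have E1 : (‖x‖ ^ (-(N:ℝ)+2) * t^(-α)) ^ p₂ = ‖x‖ ^ (-s) * t ^ (-α*p₂) := by
        rw [mul_rpow (rpow_nonneg (norm_nonneg x) _) (rpow_nonneg ht.le _),
          ← rpow_mul (norm_nonneg x), ← rpow_mul ht.le,
          show (-(N:ℝ)+2) * p₂ = -s by rw [hs]; ring]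
      have E2 : t ^ (-(e*p₂)) * g (R • x) = ‖x‖ ^ (-s) * t ^ (-α*p₂) := by
        rw [hg]; dsimp only
        rw [if_pos hcase, hnorm, mul_rpow hRpos.le (norm_nonneg x), hRdef,
          ← rpow_mul ht.le, ← mul_assoc, ← rpow_add ht,
          show -(e*p₂) + -(α/2)*(-s) = -α*p₂ by rw [he, hs]; ring, mul_comm]
      rw [E1, E2]
    · push_neg at hcase
      have hw1 : (1:ℝ) ≤ ‖R • x‖^2 := by nlinarith
      have hcond : 1 ≤ ‖x‖^2 * t^(-α) := by rw [← hsq]; exact hw1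
      have hb := hK1 t ht x hcond
      have h1 : |K t x| ^ p₂ ≤
          (‖x‖ ^ (-(N:ℝ)) * Real.exp (-c * (t ^ (-α) * ‖x‖ ^ 2) ^ (1 / (2 - α)))) ^ p₂ :=
        rpow_le_rpow (abs_nonneg _) hb hp₂0.le
      refine h1.trans ?_
      rw [mul_rpow (rpow_nonneg (norm_nonneg x) _) (Real.exp_pos _).le,
        ← rpow_mul (norm_nonneg x), ← Real.exp_mul]
      rw [hg]; dsimp only
      rw [if_neg (not_lt.2 hcase)]
      have hxnorm : ‖x‖ ^ (-(N:ℝ)*p₂) = t ^ (-(e*p₂)) * ‖R • x‖ ^ (-(N:ℝ)*p₂) := by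
        rw [hnorm, mul_rpow hRpos.le (norm_nonneg x), hRdef, ← rpow_mul ht.le,
          ← mul_assoc, ← rpow_add ht,
          show -(e*p₂) + -(α/2)*(-(N:ℝ)*p₂) = 0 by rw [he]; ring, rpow_zero, one_mul]
      rw [hxnorm, mul_assoc]
      refine mul_le_mul_of_nonneg_left ?_ (rpow_nonneg ht.le _)
      have hle1 : ‖R • x‖ ^ (-(N:ℝ)*p₂) ≤ 1 :=
        rpow_le_one_of_one_le_of_nonpos hcase
          (by nlinarith [mul_nonneg (Nat.cast_nonneg N : (0:ℝ) ≤ N) hp₂0.le])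
      have h2a : (0:ℝ) < 2 - α := by linarith
      have harg : t ^ (-α) * ‖x‖ ^ 2 = ‖R • x‖ ^ 2 := by rw [hsq]; ring
      have hmono : (‖R • x‖ ^ 2 : ℝ) ≤ (‖R • x‖ ^ 2 : ℝ) ^ (1/(2-α)) := by
        calc (‖R • x‖ ^ 2 : ℝ) = (‖R • x‖ ^ 2 : ℝ) ^ (1:ℝ) := (rpow_one _).symm
          _ ≤ (‖R • x‖ ^ 2 : ℝ) ^ (1/(2-α)) :=
            rpow_le_rpow_of_exponent_le hw1 (by rw [le_div_iff₀ h2a]; linarith)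
      calc ‖R • x‖ ^ (-(N:ℝ)*p₂) * Real.exp (-c * (t ^ (-α) * ‖x‖ ^ 2) ^ (1 / (2 - α)) * p₂)
          ≤ 1 * Real.exp (-c * (t ^ (-α) * ‖x‖ ^ 2) ^ (1 / (2 - α)) * p₂) :=
            mul_le_mul_of_nonneg_right hle1 (Real.exp_pos _).le
        _ ≤ Real.exp (-(c*p₂) * ‖R • x‖ ^ 2) := by
            rw [one_mul]
            apply Real.exp_le_exp.2
            rw [harg]
            nlinarith [mul_pos hc hp₂0, hmono,
              mul_nonneg (mul_pos hc hp₂0).le (sub_nonneg.2 hmono)]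
  set A : ℝ := ∫ y, g y with hA
  have hA0 : 0 ≤ A := integral_nonneg hg0
  refine ⟨A ^ (1/p₂) + 1, by positivity, ?_⟩
  intro t ht
  set R : ℝ := t ^ (-(α/2)) with hRdef
  have hRpos : 0 < R := rpow_pos_of_pos ht _
  have hint : Integrable (fun x : EuclideanSpace ℝ (Fin N) => t ^ (-(e*p₂)) * g (R • x)) :=
    (hgint.comp_smul hRpos.ne').const_mul _
  have h1 : (∫ x, |K t x| ^ p₂) ≤ ∫ x : EuclideanSpace ℝ (Fin N), t ^ (-(e*p₂)) * g (R • x) :=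
    integral_mono_of_nonneg (ae_of_all _ fun x => rpow_nonneg (abs_nonneg _) _) hint
      (ae_of_all _ fun x => hpt t ht x)
  have h2 : (∫ x : EuclideanSpace ℝ (Fin N), t ^ (-(e*p₂)) * g (R • x)) = t ^ (e - e*p₂) * A := by
    rw [integral_const_mul, Measure.integral_comp_smul_of_nonneg volume g R (hR := hRpos.le), hfr,
      smul_eq_mul, hRdef, ← rpow_natCast (t ^ (-(α/2))) N, ← rpow_mul ht.le,
      ← rpow_neg ht.le, ← mul_assoc, ← rpow_add ht]
    congr 2
    rw [he]; ring
  have hI0 : (0:ℝ) ≤ ∫ x, |K t x| ^ p₂ :=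
    integral_nonneg fun x => rpow_nonneg (abs_nonneg _) _
  have h3 := rpow_le_rpow hI0 (h1.trans h2.le) (by positivity : (0:ℝ) ≤ 1/p₂)
  refine h3.trans ?_
  rw [mul_rpow (rpow_nonneg ht.le _) hA0, ← rpow_mul ht.le,
    show (e - e*p₂) * (1/p₂) = -(α/2) * N * (1 - 1/p₂) by
      rw [he]; field_simp; ring,
    mul_comm]
  exact mul_le_mul_of_nonneg_right (by linarith) (rpow_nonneg ht.le _)
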